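/- arXiv:2310.00625 — 3 statements merged into one kernel-verified Lean document; each statement's English description precedes it below -/
import Mathlib

section
/- Let K ⊂ ℝ² be a bounded open connected set whose boundary ∂K is the union of finitely many closed line segments [v₁,v₂], [v₂,v₃], …, [v_N, v₁] joining the vertices v₁, …, v_N ∈ ℝ². Let v : closure(K) → ℝ be continuous on closure(K), twice differentiable on K with ∂²v/∂x₁² + ∂²v/∂x₂² = 0 on K (i.e. harmonic on K), and such that the restriction of v to each closed boundary segment is an affine function of the arc parameter. If v(v_i) = 0 for all i = 1, …, N, then v ≡ 0 on closure(K). -/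
open Filter Set Topology


/-- Second derivative test along a direction: at an interior local maximum the second
directional derivative is nonpositive. -/
lemma second_test {E : Type*} [NormedAddCommGroup E] [NormedSpace ℝ E]
    {g : E → ℝ} {g' : E → E →L[ℝ] ℝ} {g'' : E →L[ℝ] E →L[ℝ] ℝ} {x₀ e : E}
    (hmax : IsLocalMax g x₀) (hg' : ∀ᶠ x in 𝓝 x₀, HasFDerivAt g (g' x) x)
    (hg'' : HasFDerivAt g' g'' x₀) : g'' e e ≤ 0 := by
  by_contra hpos
  push_neg at hpos
  set c : ℝ → E := fun t => x₀ + t • e with hc_def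
  have hc : ∀ t : ℝ, HasDerivAt c e t := fun t => by
    rw [hc_def]; simpa only [one_smul, id] using ((hasDerivAt_id t).smul_const e).const_add x₀
  have hc0 : c 0 = x₀ := by simp [hc_def]
  have hccont : Continuous c := by fun_prop
  set φ : ℝ → ℝ := fun t => g (c t) with hφ_def
  set ψ : ℝ → ℝ := fun t => g' (c t) e with hψ_def
  -- derivative of ψ at 0
  have hgc : HasDerivAt (fun t => g' (c t)) (g'' e) 0 := by
    have hg''c : HasFDerivAt g' g'' (c 0) := by rw [hc0]; exact hg''
    have := hg''c.comp_hasDerivAt 0 (hc 0)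
    exact this
  have hψ : HasDerivAt ψ (g'' e e) 0 := by
    have := hgc.clm_apply (hasDerivAt_const (0:ℝ) e)
    simpa using this
  -- the first derivative vanishes at x₀
  have hg'x₀ : g' x₀ = 0 := hmax.hasFDerivAt_eq_zero hg'.self_of_nhds
  have hψ0 : ψ 0 = 0 := by simp [hψ_def, hc0, hg'x₀]
  -- ψ is positive just to the right of 0
  have E3 : ∀ᶠ t in 𝓝[>] (0:ℝ), 0 < ψ t := by
    have hsl : Tendsto (slope ψ 0) (𝓝[≠] (0:ℝ)) (𝓝 (g'' e e)) :=
      hasDerivAt_iff_tendsto_slope.mp hψ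
    have h1 : ∀ᶠ t in 𝓝[≠] (0:ℝ), 0 < slope ψ 0 t := hsl.eventually (eventually_gt_nhds hpos)
    have h2 : ∀ᶠ t in 𝓝[>] (0:ℝ), 0 < slope ψ 0 t :=
      h1.filter_mono (nhdsWithin_mono 0 (fun t ht => ne_of_gt ht))
    filter_upwards [h2, self_mem_nhdsWithin] with t ht ht0
    have hts : slope ψ 0 t = ψ t / t := by
      simp [slope_def_field, hψ0]
    rw [hts] at ht
    rcases div_pos_iff.mp ht with ⟨h, _⟩ | ⟨_, h⟩
    · exact h
    · exact absurd ht0 (not_lt.mpr h.le)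
  -- φ has derivative ψ near 0, and 0 is a local max of φ
  have E1 : ∀ᶠ t in 𝓝 (0:ℝ), HasDerivAt φ (ψ t) t := by
    have : ∀ᶠ t in 𝓝 (0:ℝ), HasFDerivAt g (g' (c t)) (c t) :=
      (hccont.tendsto 0).eventually (by rwa [hc0])
    filter_upwards [this] with t ht
    exact ht.comp_hasDerivAt t (hc t)
  have E2 : ∀ᶠ t in 𝓝 (0:ℝ), φ t ≤ φ 0 := by
    have : ∀ᶠ x in 𝓝 x₀, g x ≤ g x₀ := hmax
    have := (hccont.tendsto 0).eventually (by rwa [hc0] : ∀ᶠ x in 𝓝 (c 0), g x ≤ g x₀)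
    filter_upwards [this] with t ht
    simpa [φ, hc0] using ht
  have Eall : ∀ᶠ t in 𝓝[>] (0:ℝ), (HasDerivAt φ (ψ t) t ∧ φ t ≤ φ 0) ∧ 0 < ψ t :=
    ((E1.and E2).filter_mono nhdsWithin_le_nhds).and E3
  rcases mem_nhdsGT_iff_exists_Ioo_subset.mp Eall with ⟨δ, hδ, hsub⟩
  have hδ0 : 0 < δ := hδ
  set t₀ : ℝ := δ / 2 with ht₀_def
  have ht₀pos : 0 < t₀ := by positivity
  have ht₀mem : ∀ x ∈ Ioc 0 t₀, x ∈ Ioo (0:ℝ) δ := fun x hx =>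
    ⟨hx.1, lt_of_le_of_lt hx.2 (by linarith)⟩
  have hcont0 : ContinuousAt φ 0 := E1.self_of_nhds.continuousAt
  have hφcont : ContinuousOn φ (Icc 0 t₀) := by
    intro x hx
    rcases eq_or_lt_of_le hx.1 with h0 | h0
    · exact (h0 ▸ hcont0).continuousWithinAt
    · exact ((hsub (ht₀mem x ⟨h0, hx.2⟩)).1.1.continuousAt).continuousWithinAt
  obtain ⟨ξ, hξ, hξeq⟩ := exists_hasDerivAt_eq_slope φ ψ ht₀pos hφcont
    (fun x hx => (hsub (ht₀mem x ⟨hx.1, hx.2.le⟩)).1.1)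
  have hψξ : 0 < ψ ξ := (hsub (ht₀mem ξ ⟨hξ.1, hξ.2.le⟩)).2
  have hle : φ t₀ ≤ φ 0 := (hsub (ht₀mem t₀ ⟨ht₀pos, le_refl _⟩)).1.2
  rw [hξeq] at hψξ
  have : 0 < φ t₀ - φ 0 := by
    have h := (div_pos_iff.mp hψξ)
    rcases h with ⟨h, _⟩ | ⟨_, h⟩
    · exact h
    · simp at h; linarith
  linarith

/-- Maximum principle for harmonic functions on a bounded open set in the plane. -/
lemma max_principle (K : Set (EuclideanSpace ℝ (Fin 2)))
    (hKopen : IsOpen K) (hKbd : Bornology.IsBounded K)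
    (f : EuclideanSpace ℝ (Fin 2) → ℝ)
    (hcont : ContinuousOn f (closure K))
    (f' : EuclideanSpace ℝ (Fin 2) → EuclideanSpace ℝ (Fin 2) →L[ℝ] ℝ)
    (f'' : EuclideanSpace ℝ (Fin 2) →
      EuclideanSpace ℝ (Fin 2) →L[ℝ] EuclideanSpace ℝ (Fin 2) →L[ℝ] ℝ)
    (hf' : ∀ x ∈ K, HasFDerivAt f (f' x) x)
    (hf'' : ∀ x ∈ K, HasFDerivAt f' (f'' x) x)
    (hharm : ∀ x ∈ K,
      f'' x (EuclideanSpace.single 0 1) (EuclideanSpace.single 0 1)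
        + f'' x (EuclideanSpace.single 1 1) (EuclideanSpace.single 1 1) = 0)
    (hbd : ∀ x ∈ frontier K, f x ≤ 0) :
    ∀ x ∈ closure K, f x ≤ 0 := by
  intro x hx
  -- a bound for the closure
  obtain ⟨R, hR⟩ := (hKbd.closure).subset_closedBall 0
  have hRbound : ∀ y ∈ closure K, (y 0) * (y 0) ≤ R * R := by
    intro y hy
    have h1 : |y 0| ≤ ‖y‖ := by
      have := EuclideanSpace.norm_eq y
      have h2 : (y 0)^2 ≤ ∑ i : Fin 2, ‖y i‖^2 := by
        have : ‖y 0‖^2 ≤ ∑ i : Fin 2, ‖y i‖^2 :=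
          Finset.single_le_sum (f := fun i => ‖y i‖^2) (fun i _ => by positivity)
            (Finset.mem_univ 0)
        simpa [sq_abs] using this
      calc |y 0| = Real.sqrt ((y 0)^2) := (Real.sqrt_sq_eq_abs _).symm
        _ ≤ Real.sqrt (∑ i : Fin 2, ‖y i‖^2) := Real.sqrt_le_sqrt h2
        _ = ‖y‖ := (EuclideanSpace.norm_eq y).symm
    have h3 : ‖y‖ ≤ R := by simpa using hR hy
    nlinarith [abs_nonneg (y 0), abs_mul_abs_self (y 0), norm_nonneg y]
  have hcomp : IsCompact (closure K) :=
    Metric.isCompact_of_isClosed_isBounded isClosed_closure hKbd.closure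
  -- the key ε-estimate
  have key : ∀ ε : ℝ, 0 < ε → f x ≤ ε * (R * R) := by
    intro ε hε
    set proj0 : EuclideanSpace ℝ (Fin 2) →L[ℝ] ℝ := EuclideanSpace.proj 0 with hproj
    set g : EuclideanSpace ℝ (Fin 2) → ℝ := fun y => f y + ε * (y 0 * y 0) with hg_def
    set G' : EuclideanSpace ℝ (Fin 2) → EuclideanSpace ℝ (Fin 2) →L[ℝ] ℝ :=
      fun y => f' y + (2 * ε * y 0) • proj0 with hG'_def
    have hgK : ∀ y ∈ K, HasFDerivAt g (G' y) y := by
      intro y hy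
      have hp : HasFDerivAt (fun z : EuclideanSpace ℝ (Fin 2) => z 0) proj0 y :=
        proj0.hasFDerivAt
      have h1 : HasFDerivAt (fun z : EuclideanSpace ℝ (Fin 2) => ε * (z 0 * z 0))
          (ε • (y 0 • proj0 + y 0 • proj0)) y := (hp.mul hp).const_mul ε
      have h2 : ε • (y 0 • proj0 + y 0 • proj0) = (2 * ε * y 0) • proj0 := by
        ext z; simp [hproj, PiLp.proj_apply, ContinuousLinearMap.smul_apply]; ring
      rw [h2] at h1
      exact (hf' y hy).add h1
    have hc0 : Continuous fun y : EuclideanSpace ℝ (Fin 2) => y 0 := by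
      have := proj0.continuous
      simpa [hproj] using this
    have hmaxg : ContinuousOn g (closure K) :=
      hcont.add ((continuous_const.mul (hc0.mul hc0)).continuousOn)
    obtain ⟨x₀, hx₀mem, hx₀max⟩ := hcomp.exists_isMaxOn ⟨x, hx⟩ hmaxg
    by_cases hx₀K : x₀ ∈ K
    · -- interior max: contradiction with harmonicity
      exfalso
      have hloc : IsLocalMax g x₀ :=
        hx₀max.isLocalMax (mem_of_superset (hKopen.mem_nhds hx₀K) subset_closure)
      have hEg' : ∀ᶠ y in 𝓝 x₀, HasFDerivAt g (G' y) y := by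
        filter_upwards [hKopen.mem_nhds hx₀K] with y hy using hgK y hy
      set L : EuclideanSpace ℝ (Fin 2) →L[ℝ] EuclideanSpace ℝ (Fin 2) →L[ℝ] ℝ :=
        ((2 * ε) • proj0).smulRight proj0 with hL
      have hG'' : HasFDerivAt G' (f'' x₀ + L) x₀ := by
        have : G' = fun y => f' y + L y := by
          funext y
          simp [hG'_def, hL, hproj, PiLp.proj_apply, ContinuousLinearMap.smulRight_apply, mul_assoc]
        rw [this]
        exact (hf'' x₀ hx₀K).add L.hasFDerivAt
      have key0 := second_test (e := EuclideanSpace.single (0 : Fin 2) (1:ℝ)) hloc hEg' hG''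
      have key1 := second_test (e := EuclideanSpace.single (1 : Fin 2) (1:ℝ)) hloc hEg' hG''
      have hL0 : L (EuclideanSpace.single (0:Fin 2) (1:ℝ)) (EuclideanSpace.single (0:Fin 2) (1:ℝ)) = 2 * ε := by
        simp [hL, hproj, PiLp.proj_apply, ContinuousLinearMap.smulRight_apply, EuclideanSpace.single_apply]
      have hL1 : L (EuclideanSpace.single (1:Fin 2) (1:ℝ)) (EuclideanSpace.single (1:Fin 2) (1:ℝ)) = 0 := by
        simp [hL, hproj, PiLp.proj_apply, ContinuousLinearMap.smulRight_apply, EuclideanSpace.single_apply]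
      simp only [ContinuousLinearMap.add_apply] at key0 key1
      rw [hL0] at key0
      rw [hL1] at key1
      have := hharm x₀ hx₀K
      linarith
    · -- boundary max
      have hfr : x₀ ∈ frontier K := by
        rw [hKopen.frontier_eq]
        exact ⟨hx₀mem, hx₀K⟩
      have h1 : g x ≤ g x₀ := hx₀max hx
      have h2 : f x₀ ≤ 0 := hbd x₀ hfr
      have h3 : x₀ 0 * x₀ 0 ≤ R * R := hRbound x₀ hx₀mem
      have h4 : 0 ≤ x 0 * x 0 := mul_self_nonneg _
      simp only [hg_def] at h1
      nlinarith
  by_contra hfx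
  push_neg at hfx
  have hRR : 0 ≤ R * R := by
    have := hRbound x hx
    nlinarith [mul_self_nonneg (x 0)]
  have := key (f x / (2 * (R * R + 1))) (by positivity)
  have h5 : f x / (2 * (R * R + 1)) * (R * R) < f x := by
    rw [div_mul_eq_mul_div, div_lt_iff₀ (by positivity)]
    nlinarith
  linarith

/-- A function that is harmonic in a bounded open connected polygon `K`, continuous on its
closure, affine on each (closed) boundary edge, and vanishing at all the vertices, vanishes
identically on the closure of `K` (unisolvence of the vertex degrees of freedom for the lowest
order virtual element space). -/
theorem stmt_12 (N : ℕ) (K : Set (EuclideanSpace ℝ (Fin 2)))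
    (hKopen : IsOpen K) (hKbd : Bornology.IsBounded K) (hKconn : IsConnected K)
    (v : Fin (N + 1) → EuclideanSpace ℝ (Fin 2))
    (hbdry : frontier K = ⋃ i : Fin (N + 1), segment ℝ (v i) (v (i + 1)))
    (f : EuclideanSpace ℝ (Fin 2) → ℝ)
    (hcont : ContinuousOn f (closure K))
    (f' : EuclideanSpace ℝ (Fin 2) → EuclideanSpace ℝ (Fin 2) →L[ℝ] ℝ)
    (f'' : EuclideanSpace ℝ (Fin 2) →
      EuclideanSpace ℝ (Fin 2) →L[ℝ] EuclideanSpace ℝ (Fin 2) →L[ℝ] ℝ)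
    (hf' : ∀ x ∈ K, HasFDerivAt f (f' x) x)
    (hf'' : ∀ x ∈ K, HasFDerivAt f' (f'' x) x)
    (hharm : ∀ x ∈ K,
      f'' x (EuclideanSpace.single 0 1) (EuclideanSpace.single 0 1)
        + f'' x (EuclideanSpace.single 1 1) (EuclideanSpace.single 1 1) = 0)
    (haff : ∀ i : Fin (N + 1), ∃ a b : ℝ, ∀ t ∈ Set.Icc (0 : ℝ) 1,
      f ((1 - t) • v i + t • v (i + 1)) = a * t + b)
    (hvanish : ∀ i, f (v i) = 0) :
    ∀ x ∈ closure K, f x = 0 := by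
  -- f vanishes on the boundary
  have hfr : ∀ x ∈ frontier K, f x = 0 := by
    intro x hxfr
    rw [hbdry] at hxfr
    obtain ⟨i, hxi⟩ := Set.mem_iUnion.mp hxfr
    rw [segment_eq_image] at hxi
    obtain ⟨t, ht, rfl⟩ := hxi
    obtain ⟨a, b, hab⟩ := haff i
    have h0 := hab 0 ⟨le_refl _, zero_le_one⟩
    have h1 := hab 1 ⟨zero_le_one, le_refl _⟩
    simp only [sub_zero, one_smul, zero_smul, add_zero, mul_zero, mul_one, zero_add,
      sub_self, zero_smul, zero_add, one_smul] at h0 h1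
    rw [hvanish i] at h0
    rw [hvanish (i + 1)] at h1
    rw [hab t ht, ← h0]
    have ha : a = 0 := by linarith
    rw [ha]; ring
  intro x hx
  have h1 : f x ≤ 0 := max_principle K hKopen hKbd f hcont f' f'' hf' hf'' hharm
    (fun y hy => le_of_eq (hfr y hy)) x hx
  have h2 : (fun y => -f y) x ≤ 0 := by
    refine max_principle K hKopen hKbd (fun y => -f y) hcont.neg (fun y => -(f' y))
      (fun y => -(f'' y)) (fun y hy => (hf' y hy).neg) (fun y hy => (hf'' y hy).neg)
      (fun y hy => ?_) (fun y hy => ?_) x hx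
    · simp only [ContinuousLinearMap.neg_apply]
      linarith [hharm y hy]
    · simp [hfr y hy]
  simp only at h2
  linarith
end

section
/- Let K ⊂ ℝ² be a bounded open connected set whose boundary ∂K is the union of finitely many closed line segments [v₁,v₂], [v₂,v₃], …, [v_N, v₁] joining the vertices v₁, …, v_N ∈ ℝ², and let V₁(K) be the real vector space of functions v : closure(K) → ℝ that are continuous on closure(K), twice differentiable on K with ∂²v/∂x₁² + ∂²v/∂x₂² = 0 on K, and whose restriction to each closed boundary segment is an affine function of the arc parameter. Then the dofi–dofi bilinear form S(v,w) = Σ_{i=1}^N v(v_i) w(v_i) is a symmetric positive definite bilinear form on V₁(K): S is symmetric, S(v,v) ≥ 0 for all v ∈ V₁(K), and S(v,v) = 0 implies v ≡ 0. -/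
open Filter Topology Metric

lemma second_deriv_test {E : Type*} [NormedAddCommGroup E] [NormedSpace ℝ E]
    {g : E → ℝ} {g' : E → E →L[ℝ] ℝ} {g'' : E →L[ℝ] E →L[ℝ] ℝ} {x₀ : E} (u : E)
    (hg : ∀ᶠ x in 𝓝 x₀, HasFDerivAt g (g' x) x)
    (hg' : HasFDerivAt g' g'' x₀)
    (hmax : IsLocalMax g x₀) : g'' u u ≤ 0 := by
  by_contra hpos
  push_neg at hpos
  obtain ⟨r, hr, hball⟩ : ∃ r > 0, ∀ x ∈ ball x₀ r, HasFDerivAt g (g' x) x ∧ g x ≤ g x₀ := by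
    have := hg.and hmax
    rwa [Metric.eventually_nhds_iff_ball] at this
  set δ : ℝ := r / (‖u‖ + 1) with hδdef
  have hδ : 0 < δ := div_pos hr (by positivity)
  have hmem : ∀ t : ℝ, |t| < δ → x₀ + t • u ∈ ball x₀ r := by
    intro t ht
    rw [Metric.mem_ball, dist_eq_norm]
    have h1 : ‖x₀ + t • u - x₀‖ = |t| * ‖u‖ := by
      simp [norm_smul]
    rw [h1]
    have h2 : δ * (‖u‖ + 1) = r := div_mul_cancel₀ r (by positivity)
    nlinarith [abs_nonneg t, norm_nonneg u]
  set φ : ℝ → ℝ := fun t => g (x₀ + t • u) with hφdef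
  set ψ : ℝ → ℝ := fun t => g' (x₀ + t • u) u with hψdef
  have hline : ∀ t : ℝ, HasDerivAt (fun s : ℝ => x₀ + s • u) u t := by
    intro t
    simpa using ((hasDerivAt_id t).smul_const u).const_add x₀
  have hφ' : ∀ t : ℝ, |t| < δ → HasDerivAt φ (ψ t) t := by
    intro t ht
    exact ((hball _ (hmem t ht)).1).comp_hasDerivAt t (hline t)
  have hψ' : HasDerivAt ψ (g'' u u) 0 := by
    have h0 : (x₀ + (0:ℝ) • u) = x₀ := by simp
    have h1 : HasDerivAt (fun s : ℝ => g' (x₀ + s • u)) (g'' u) 0 := by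
      refine HasFDerivAt.comp_hasDerivAt 0 ?_ (hline 0)
      rw [h0]; exact hg'
    have h2 := h1.clm_apply (hasDerivAt_const (0:ℝ) u)
    simpa using h2
  have hg'x₀ : g' x₀ = 0 := hmax.hasFDerivAt_eq_zero hg.self_of_nhds
  have hψ0 : ψ 0 = 0 := by simp [hψdef, hg'x₀]
  -- eventually ψ t > 0 for small t > 0
  have hslope : Tendsto (slope ψ 0) (𝓝[≠] 0) (𝓝 (g'' u u)) :=
    hasDerivAt_iff_tendsto_slope.mp hψ'
  have hev : ∀ᶠ t in 𝓝[≠] (0:ℝ), 0 < slope ψ 0 t :=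
    hslope.eventually (eventually_gt_nhds hpos)
  have hev' : ∀ᶠ t in 𝓝[>] (0:ℝ), 0 < slope ψ 0 t :=
    hev.filter_mono (nhdsWithin_mono _ (fun t ht => ne_of_gt ht))
  obtain ⟨δ', hδ'mem, hδ'⟩ := mem_nhdsGT_iff_exists_Ioo_subset.mp hev'
  have hδ'pos : 0 < δ' := hδ'mem
  have hψpos : ∀ t ∈ Set.Ioo (0:ℝ) δ', 0 < ψ t := by
    intro t ht
    have := hδ' ht
    have hslope_t : 0 < ψ t / t := by
      simpa [slope_def_field, hψ0] using this
    have := mul_pos hslope_t ht.1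
    rwa [div_mul_cancel₀ _ (ne_of_gt ht.1)] at this
  set t₁ : ℝ := min δ δ' / 2 with ht₁def
  have ht₁pos : 0 < t₁ := by positivity
  have ht₁δ : t₁ < δ := by
    have := min_le_left δ δ'
    simp only [ht₁def]; linarith
  have ht₁δ' : t₁ < δ' := by
    have := min_le_right δ δ'
    simp only [ht₁def]; linarith
  have hmono : StrictMonoOn φ (Set.Icc 0 t₁) := by
    apply strictMonoOn_of_deriv_pos (convex_Icc 0 t₁)
    · intro t ht
      have habs : |t| < δ := by
        rw [abs_lt]; constructor <;> [linarith [ht.1]; linarith [ht.2]]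
      exact (hφ' t habs).continuousAt.continuousWithinAt
    · intro t ht
      rw [interior_Icc] at ht
      have habs : |t| < δ := by
        rw [abs_lt]; constructor <;> [linarith [ht.1]; linarith [ht.2]]
      rw [(hφ' t habs).deriv]
      exact hψpos t ⟨ht.1, lt_trans ht.2 ht₁δ'⟩
  have hlt : φ 0 < φ t₁ :=
    hmono (Set.left_mem_Icc.2 (le_of_lt ht₁pos)) (Set.right_mem_Icc.2 (le_of_lt ht₁pos)) ht₁pos
  have hle : φ t₁ ≤ φ 0 := by
    have habs : |t₁| < δ := by rwa [abs_of_pos ht₁pos]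
    have := (hball _ (hmem t₁ habs)).2
    simpa [hφdef] using this
  linarith

set_option synthInstance.maxHeartbeats 200000 in
lemma vem_max_principle (K : Set (EuclideanSpace ℝ (Fin 2))) (hKopen : IsOpen K)
    (hKbd : Bornology.IsBounded K)
    (f : EuclideanSpace ℝ (Fin 2) → ℝ)
    (hfc : ContinuousOn f (closure K))
    (f' : EuclideanSpace ℝ (Fin 2) → EuclideanSpace ℝ (Fin 2) →L[ℝ] ℝ)
    (f'' : EuclideanSpace ℝ (Fin 2) →
        EuclideanSpace ℝ (Fin 2) →L[ℝ] EuclideanSpace ℝ (Fin 2) →L[ℝ] ℝ)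
    (hder : ∀ x ∈ K, HasFDerivAt f (f' x) x ∧ HasFDerivAt f' (f'' x) x ∧
      f'' x (EuclideanSpace.single 0 1) (EuclideanSpace.single 0 1)
        + f'' x (EuclideanSpace.single 1 1) (EuclideanSpace.single 1 1) = 0)
    (hfr : ∀ x ∈ frontier K, f x ≤ 0) :
    ∀ x ∈ closure K, f x ≤ 0 := by
  obtain ⟨R, hR⟩ := hKbd.closure.subset_closedBall 0
  have hRnorm : ∀ y ∈ closure K, ‖y‖ ≤ R := fun y hy => by
    simpa [mem_closedBall, dist_zero_right] using hR hy
  set q : EuclideanSpace ℝ (Fin 2) → ℝ := fun y => (y 0)^2 + (y 1)^2 with hq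
  have hq0 : ∀ y, 0 ≤ q y := fun y => by positivity
  have hqnorm : ∀ y : EuclideanSpace ℝ (Fin 2), q y = ‖y‖^2 := by
    intro y
    rw [EuclideanSpace.norm_eq, Real.sq_sqrt (by positivity)]
    simp [hq, Fin.sum_univ_two, sq_abs]
  have hqR : ∀ y ∈ closure K, q y ≤ R^2 := by
    intro y hy
    rw [hqnorm]
    have h1 := hRnorm y hy
    nlinarith [norm_nonneg y]
  have hqcont : Continuous q := by
    have h0 : Continuous fun y : EuclideanSpace ℝ (Fin 2) => y 0 :=
      (EuclideanSpace.proj (0 : Fin 2)).continuous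
    have h1 : Continuous fun y : EuclideanSpace ℝ (Fin 2) => y 1 :=
      (EuclideanSpace.proj (1 : Fin 2)).continuous
    exact (h0.pow 2).add (h1.pow 2)
  intro x hx
  have hR2 : (0:ℝ) < R^2 + 1 := by positivity
  refine le_of_forall_pos_le_add ?_
  intro ε' hε'
  set ε : ℝ := ε' / (R^2 + 1) with hεdef
  have hε : 0 < ε := div_pos hε' hR2
  set g : EuclideanSpace ℝ (Fin 2) → ℝ := fun y => f y + ε * q y with hg
  have hgcont : ContinuousOn g (closure K) :=
    hfc.add ((hqcont.const_smul ε).continuousOn.congr (fun y _ => by simp [smul_eq_mul]))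
  have hcp : IsCompact (closure K) := hKbd.isCompact_closure
  obtain ⟨x₀, hx₀, hmax⟩ := hcp.exists_isMaxOn ⟨x, hx⟩ hgcont
  by_cases hx₀K : x₀ ∈ K
  · exfalso
    -- build derivative data for g
    set p0 : EuclideanSpace ℝ (Fin 2) →L[ℝ] ℝ := EuclideanSpace.proj 0 with hp0
    set p1 : EuclideanSpace ℝ (Fin 2) →L[ℝ] ℝ := EuclideanSpace.proj 1 with hp1
    set B : EuclideanSpace ℝ (Fin 2) →L[ℝ] (EuclideanSpace ℝ (Fin 2) →L[ℝ] ℝ) :=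
      (2*ε) • (p0.smulRight p0 + p1.smulRight p1) with hB
    set g' : EuclideanSpace ℝ (Fin 2) → EuclideanSpace ℝ (Fin 2) →L[ℝ] ℝ :=
      fun y => f' y + B y with hg'
    have hqder : ∀ y : EuclideanSpace ℝ (Fin 2),
        HasFDerivAt (fun z => ε * q z) (B y) y := by
      intro y
      have h0 : HasFDerivAt (fun z : EuclideanSpace ℝ (Fin 2) => z 0) p0 y := p0.hasFDerivAt
      have h1 : HasFDerivAt (fun z : EuclideanSpace ℝ (Fin 2) => z 1) p1 y := p1.hasFDerivAt
      have hc : HasFDerivAt (fun z => ε * q z)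
          (ε • ((y 0 • p0 + y 0 • p0) + (y 1 • p1 + y 1 • p1))) y := by
        have := ((h0.mul h0).add (h1.mul h1)).const_mul ε
        exact this.congr_of_eventuallyEq
          (Filter.Eventually.of_forall fun z => by simp only [hq, Pi.mul_apply, Pi.add_apply]; ring)
      refine hc.congr_fderiv ?_
      ext z
      simp only [hB, hp0, hp1, ContinuousLinearMap.smul_apply,
        ContinuousLinearMap.add_apply, ContinuousLinearMap.smulRight_apply,
        PiLp.proj_apply, smul_eq_mul]
      ring
    have hgK : ∀ y ∈ K, HasFDerivAt g (g' y) y := by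
      intro y hy
      exact ((hder y hy).1).add (hqder y)
    have hgev : ∀ᶠ y in 𝓝 x₀, HasFDerivAt g (g' y) y :=
      eventually_of_mem (hKopen.mem_nhds hx₀K) hgK
    have hg'der : HasFDerivAt g' (f'' x₀ + B) x₀ :=
      ((hder x₀ hx₀K).2.1).add B.hasFDerivAt
    have hlocmax : IsLocalMax g x₀ :=
      eventually_of_mem (hKopen.mem_nhds hx₀K) (fun y hy => hmax (subset_closure hy))
    have ht0 := second_deriv_test (EuclideanSpace.single 0 1) hgev hg'der hlocmax
    have ht1 := second_deriv_test (EuclideanSpace.single 1 1) hgev hg'der hlocmax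
    have hBe : ∀ i : Fin 2, B (EuclideanSpace.single i 1) (EuclideanSpace.single i 1) = 2*ε := by
      intro i
      fin_cases i <;>
        simp [hB, hp0, hp1, smul_eq_mul, EuclideanSpace.single_apply]
    have hlap := (hder x₀ hx₀K).2.2
    simp only [ContinuousLinearMap.add_apply] at ht0 ht1
    rw [hBe 0] at ht0
    rw [hBe 1] at ht1
    linarith
  · have hx₀fr : x₀ ∈ frontier K := by
      rw [frontier, hKopen.interior_eq]
      exact ⟨hx₀, hx₀K⟩
    have h1 : g x ≤ g x₀ := hmax hx
    have h2 : f x₀ ≤ 0 := hfr x₀ hx₀fr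
    have h3 : q x₀ ≤ R^2 := hqR x₀ hx₀
    have h4 : 0 ≤ q x := hq0 x
    have h5 : f x ≤ ε * R^2 := by
      simp only [hg] at h1
      nlinarith
    have h6 : ε * R^2 ≤ ε' := by
      rw [hεdef]
      rw [div_mul_eq_mul_div, div_le_iff₀ hR2]
      nlinarith
    linarith




/-- Membership in the lowest order local virtual element space on the polygon with vertices
`v 0, …, v N`: continuous on the closure of `K`, twice differentiable and harmonic in `K`, and
affine (in the arc parameter) on each closed boundary edge. -/
def MemV1 {N : ℕ} (K : Set (EuclideanSpace ℝ (Fin 2)))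
    (v : Fin (N + 1) → EuclideanSpace ℝ (Fin 2)) (f : EuclideanSpace ℝ (Fin 2) → ℝ) : Prop :=
  ContinuousOn f (closure K) ∧
  (∃ (f' : EuclideanSpace ℝ (Fin 2) → EuclideanSpace ℝ (Fin 2) →L[ℝ] ℝ)
      (f'' : EuclideanSpace ℝ (Fin 2) →
        EuclideanSpace ℝ (Fin 2) →L[ℝ] EuclideanSpace ℝ (Fin 2) →L[ℝ] ℝ),
    ∀ x ∈ K, HasFDerivAt f (f' x) x ∧ HasFDerivAt f' (f'' x) x ∧
      f'' x (EuclideanSpace.single 0 1) (EuclideanSpace.single 0 1)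
        + f'' x (EuclideanSpace.single 1 1) (EuclideanSpace.single 1 1) = 0) ∧
  (∀ i : Fin (N + 1), ∃ a b : ℝ, ∀ t ∈ Set.Icc (0 : ℝ) 1,
    f ((1 - t) • v i + t • v (i + 1)) = a * t + b)

/-- The dofi–dofi form `S(f,g) = Σᵢ f(vᵢ) g(vᵢ)` is symmetric and positive definite on the
lowest order local virtual element space of a bounded open connected polygon `K`. -/
theorem stmt_13 (N : ℕ) (K : Set (EuclideanSpace ℝ (Fin 2)))
    (hKopen : IsOpen K) (hKbd : Bornology.IsBounded K) (hKconn : IsConnected K)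
    (v : Fin (N + 1) → EuclideanSpace ℝ (Fin 2))
    (hbdry : frontier K = ⋃ i : Fin (N + 1), segment ℝ (v i) (v (i + 1)))
    (f g : EuclideanSpace ℝ (Fin 2) → ℝ)
    (hf : MemV1 K v f) (hg : MemV1 K v g) :
    (∑ i, f (v i) * g (v i) = ∑ i, g (v i) * f (v i)) ∧
    (0 ≤ ∑ i, f (v i) * f (v i)) ∧
    ((∑ i, f (v i) * f (v i)) = 0 → ∀ x ∈ closure K, f x = 0) := by
  refine ⟨Finset.sum_congr rfl (fun i _ => mul_comm _ _),
    Finset.sum_nonneg (fun i _ => mul_self_nonneg _), ?_⟩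
  intro hsum x hx
  -- each vertex value vanishes
  have hvz : ∀ i : Fin (N + 1), f (v i) = 0 := by
    intro i
    have := (Finset.sum_eq_zero_iff_of_nonneg
      (fun j _ => mul_self_nonneg (f (v j)))).mp hsum i (Finset.mem_univ i)
    exact mul_self_eq_zero.mp this
  -- f vanishes on the frontier
  have hfr : ∀ y ∈ frontier K, f y = 0 := by
    intro y hy
    rw [hbdry] at hy
    obtain ⟨s, ⟨i, rfl⟩, hys⟩ := hy
    simp only [segment_eq_image] at hys
    obtain ⟨t, ht, rfl⟩ := hys
    obtain ⟨a, b, hab⟩ := hf.2.2 i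
    have h0 := hab 0 (by norm_num)
    have h1 := hab 1 (by norm_num)
    simp only [sub_zero, one_smul, zero_smul, add_zero, mul_zero, zero_add,
      sub_self, zero_add, mul_one] at h0 h1
    rw [hvz i] at h0
    rw [hvz (i + 1)] at h1
    have hb : b = 0 := h0.symm
    have ha : a = 0 := by rw [hb] at h1; linarith [h1.symm]
    rw [hab t ht, ha, hb]
    ring
  obtain ⟨f', f'', hder⟩ := hf.2.1
  have hle : f x ≤ 0 :=
    vem_max_principle K hKopen hKbd f hf.1 f' f'' hder
      (fun y hy => le_of_eq (hfr y hy)) x hx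
  have hge : -f x ≤ 0 := by
    refine vem_max_principle K hKopen hKbd (fun y => -f y) hf.1.neg
      (fun y => -(f' y)) (fun y => -(f'' y)) ?_
      (fun y hy => by simp [hfr y hy]) x hx
    intro y hy
    obtain ⟨h1, h2, h3⟩ := hder y hy
    refine ⟨h1.neg, h2.neg, ?_⟩
    simp only [ContinuousLinearMap.neg_apply]
    linarith
  linarith
end

section
/- Let H be a real inner product space and P : H → H a linear map with P ∘ P = P and ⟨P x, y⟩ = ⟨x, P y⟩ for all x, y ∈ H (an orthogonal projection). Let 0 < c⋆ ≤ c* and let S : H × H → ℝ be a symmetric bilinear form satisfying c⋆ ‖w‖² ≤ S(w,w) ≤ c* ‖w‖² for every w in the range of I − P. Define a_h(u,v) = ⟨P u, P v⟩ + S((I−P)u, (I−P)v). Then for every v ∈ H, min(1, c⋆) ‖v‖² ≤ a_h(v,v) ≤ max(1, c*) ‖v‖². -/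
/-- Spectral equivalence of the stabilized virtual element form: if `P` is an orthogonal
projection on a real inner product space `H` and `S` is a symmetric bilinear form spectrally
equivalent (with constants `0 < c⋆ ≤ c*`) to the squared norm on the range of `I − P`, then
`a_h(v,v) = ⟪Pv, Pv⟫ + S((I−P)v, (I−P)v)` satisfies
`min(1,c⋆) ‖v‖² ≤ a_h(v,v) ≤ max(1,c*) ‖v‖²` for all `v`. -/
theorem stmt_14 {H : Type*} [NormedAddCommGroup H] [InnerProductSpace ℝ H]
    (P : H →ₗ[ℝ] H)
    (hidem : ∀ x, P (P x) = P x)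
    (hsym : ∀ x y, (inner ℝ (P x) y : ℝ) = inner ℝ x (P y))
    (S : H →ₗ[ℝ] H →ₗ[ℝ] ℝ) (hSsym : ∀ x y, S x y = S y x)
    (cs cb : ℝ) (hcs : 0 < cs) (hcscb : cs ≤ cb)
    (hspec : ∀ w ∈ LinearMap.range (LinearMap.id - P),
      cs * ‖w‖ ^ 2 ≤ S w w ∧ S w w ≤ cb * ‖w‖ ^ 2) :
    ∀ v : H,
      min 1 cs * ‖v‖ ^ 2 ≤ (inner ℝ (P v) (P v) : ℝ) + S (v - P v) (v - P v) ∧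
      (inner ℝ (P v) (P v) : ℝ) + S (v - P v) (v - P v) ≤ max 1 cb * ‖v‖ ^ 2 := by
  intro v
  set w := v - P v with hw
  have hmem : w ∈ LinearMap.range (LinearMap.id - P) := ⟨v, by simp [hw]⟩
  obtain ⟨hS1, hS2⟩ := hspec w hmem
  have horth : (inner ℝ (P v) w : ℝ) = 0 := by
    have : (inner ℝ (P v) (P v) : ℝ) = inner ℝ v (P v) := by
      rw [hsym v (P v), hidem]
    simp [hw, inner_sub_right, real_inner_comm v (P v), this]
    rw [← real_inner_self_eq_norm_sq, this, sub_self]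
  have hpyth : ‖v‖ ^ 2 = ‖P v‖ ^ 2 + ‖w‖ ^ 2 := by
    have hv : v = P v + w := by simp [hw]
    calc ‖v‖ ^ 2 = ‖P v + w‖ ^ 2 := by rw [← hv]
      _ = ‖P v‖ ^ 2 + 2 * inner ℝ (P v) w + ‖w‖ ^ 2 := by
          rw [← real_inner_self_eq_norm_sq, ← real_inner_self_eq_norm_sq,
            ← real_inner_self_eq_norm_sq, inner_add_add_self, real_inner_comm w (P v)]
          ring
      _ = ‖P v‖ ^ 2 + ‖w‖ ^ 2 := by rw [horth]; ring
  have hPP : (inner ℝ (P v) (P v) : ℝ) = ‖P v‖ ^ 2 := real_inner_self_eq_norm_sq _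
  have h1 : (0:ℝ) ≤ ‖P v‖ ^ 2 := sq_nonneg _
  have h2 : (0:ℝ) ≤ ‖w‖ ^ 2 := sq_nonneg _
  constructor
  · rw [hPP, hpyth]
    have hmin1 : min 1 cs ≤ 1 := min_le_left _ _
    have hmin2 : min 1 cs ≤ cs := min_le_right _ _
    nlinarith [mul_le_mul_of_nonneg_right hmin1 h1, mul_le_mul_of_nonneg_right hmin2 h2]
  · rw [hPP, hpyth]
    have hmax1 : (1:ℝ) ≤ max 1 cb := le_max_left _ _
    have hmax2 : cb ≤ max 1 cb := le_max_right _ _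
    nlinarith [mul_le_mul_of_nonneg_right hmax1 h1, mul_le_mul_of_nonneg_right hmax2 h2]
end
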